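/- arXiv:1408.0853 — 5 statements merged into one kernel-verified Lean document; each statement's English description precedes it below -/
import Mathlib

section
/- Let U be a nonempty set, let Q be a positive integer, and for each q = 1, …, Q let H_q be a subspace of the real vector space of functions U → ℝ (with pointwise operations), equipped with an inner product ⟨·,·⟩_{H_q} making it a real Hilbert space, and suppose κ_q : U × U → ℝ is a reproducing kernel for H_q (i.e., for every u ∈ U, κ_q(·,u) ∈ H_q and ⟨f, κ_q(·,u)⟩_{H_q} = f(u) for all f ∈ H_q). Let H⁺ = { Σ_{q=1}^Q f_q : f_q ∈ H_q } ⊆ (U → ℝ). Then there exists an inner product ⟨·,·⟩_{H⁺} on H⁺ such that: (i) for every f ∈ H⁺, the infimum inf{ Σ_{q=1}^Q ‖f_q‖²_{H_q} : f = Σ_{q=1}^Q f_q, f_q ∈ H_q } is attained and equals ⟨f,f⟩_{H⁺}; (ii) H⁺ is complete with respect to the induced norm; and (iii) κ := Σ_{q=1}^Q κ_q is a reproducing kernel for H⁺, i.e., κ(·,u) ∈ H⁺ and ⟨f, κ(·,u)⟩_{H⁺} = f(u) for all f ∈ H⁺ and u ∈ U. -/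
open scoped RealInnerProductSpace

noncomputable def sumMap {U : Type*} {Q : ℕ} {H : Fin Q → Type*}
    [∀ q, NormedAddCommGroup (H q)] [∀ q, InnerProductSpace ℝ (H q)]
    (J : ∀ q, H q →ₗ[ℝ] (U → ℝ)) : PiLp 2 H →ₗ[ℝ] (U → ℝ) where
  toFun g := ∑ q, J q (g q)
  map_add' x y := by simp [Finset.sum_add_distrib]
  map_smul' c x := by simp [Finset.smul_sum]

/-- Theorem 1 (Reproducing kernel of the sum space `H⁺`, Aronszajn):
the sum space of finitely many RKHSs over `U`, with the minimum-norm inner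
product, is itself a RKHS with kernel the sum of the kernels. -/
theorem sum_space_is_rkhs
    (U : Type*) [Nonempty U] (Q : ℕ) (hQ : 0 < Q)
    (H : Fin Q → Type*)
    [∀ q, NormedAddCommGroup (H q)] [∀ q, InnerProductSpace ℝ (H q)]
    [∀ q, CompleteSpace (H q)]
    (J : ∀ q, H q →ₗ[ℝ] (U → ℝ)) (hJ : ∀ q, Function.Injective (J q))
    (κ : Fin Q → U → U → ℝ) (k : ∀ q, U → H q)
    (hk : ∀ q u, J q (k q u) = fun v => κ q v u)
    (hrep : ∀ (q : Fin Q) (f : H q) (u : U), ⟪f, k q u⟫ = J q f u)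
    (Hplus : Set (U → ℝ))
    (hHplus : Hplus = {f | ∃ g : ∀ q, H q, f = ∑ q, J q (g q)}) :
    ∃ ip : (U → ℝ) → (U → ℝ) → ℝ,
      -- `ip` is an inner product on `H⁺`:
      (∀ f ∈ Hplus, ∀ g ∈ Hplus, ip f g = ip g f) ∧
      (∀ f ∈ Hplus, ∀ g ∈ Hplus, ∀ h ∈ Hplus, ip (f + g) h = ip f h + ip g h) ∧
      (∀ (c : ℝ), ∀ f ∈ Hplus, ∀ g ∈ Hplus, ip (c • f) g = c * ip f g) ∧
      (∀ f ∈ Hplus, 0 ≤ ip f f) ∧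
      (∀ f ∈ Hplus, ip f f = 0 → f = 0) ∧
      -- (i) the infimum over all decompositions is attained and equals `ip f f`:
      (∀ f ∈ Hplus,
        IsLeast {s : ℝ | ∃ g : ∀ q, H q, f = ∑ q, J q (g q) ∧ s = ∑ q, ‖g q‖ ^ 2}
          (ip f f)) ∧
      -- (ii) `H⁺` is complete with respect to the induced norm:
      (∀ s : ℕ → (U → ℝ), (∀ n, s n ∈ Hplus) →
        (∀ ε > (0 : ℝ), ∃ N, ∀ m ≥ N, ∀ n ≥ N, ip (s m - s n) (s m - s n) < ε) →
        ∃ f ∈ Hplus,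
          Filter.Tendsto (fun n => ip (s n - f) (s n - f)) Filter.atTop (nhds 0)) ∧
      -- (iii) `κ = ∑ q, κ q` is a reproducing kernel for `H⁺`:
      (∀ u : U, (fun v => ∑ q, κ q v u) ∈ Hplus) ∧
      (∀ f ∈ Hplus, ∀ u : U, ip f (fun v => ∑ q, κ q v u) = f u) := by

  classical
  set E := PiLp 2 H with hE
  let T : E →ₗ[ℝ] (U → ℝ) := sumMap J
  let K : Submodule ℝ E := LinearMap.ker T
  let kvec : U → E := fun u => WithLp.toLp 2 (fun q => k q u)
  have hTdef : ∀ g : E, T g = ∑ q, J q (g q) := fun g => rfl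
  have hTeval : ∀ (g : E) (u : U), T g u = ⟪g, kvec u⟫ := by
    intro g u
    rw [hTdef, PiLp.inner_apply]
    simp only [kvec, WithLp.ofLp_toLp, hrep]
    rw [Finset.sum_apply]
  have hKclosed : IsClosed (K : Set E) := by
    have h1 : (K : Set E) = ⋂ u, {g : E | ⟪kvec u, g⟫ = 0} := by
      ext g
      simp only [Set.mem_iInter, SetLike.mem_coe, LinearMap.mem_ker, Set.mem_setOf_eq]
      constructor
      · intro h u
        rw [real_inner_comm, ← hTeval, h]
        rfl
      · intro h
        funext u
        have := h u
        rw [real_inner_comm] at this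
        rw [hTeval]
        exact this
    rw [h1]
    exact isClosed_iInter fun u =>
      isClosed_eq (innerSL ℝ (kvec u)).continuous continuous_const
  haveI : CompleteSpace E := inferInstance
  haveI : CompleteSpace K := hKclosed.completeSpace_coe
  haveI : CompleteSpace (Kᗮ : Submodule ℝ E) := K.isClosed_orthogonal.completeSpace_coe
  have hmem : ∀ f, f ∈ Hplus ↔ ∃ g : E, f = T g := by
    intro f; rw [hHplus]; exact ⟨fun ⟨g, hg⟩ => ⟨WithLp.toLp 2 g, hg⟩, fun ⟨g, hg⟩ => ⟨g.ofLp, hg⟩⟩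
  let pre : (U → ℝ) → E := fun f => if h : ∃ g : E, f = T g then h.choose else 0
  let r : (U → ℝ) → E := fun f => (Kᗮ.orthogonalProjectionOnto (pre f) : E)
  have hpre : ∀ f ∈ Hplus, f = T (pre f) := by
    intro f hf
    have h := (hmem f).mp hf
    simp only [pre, dif_pos h]
    exact h.choose_spec
  have hrmem : ∀ f, r f ∈ Kᗮ := fun f => (Kᗮ.orthogonalProjectionOnto (pre f)).2
  have hKbot : Kᗮᗮ = K := K.orthogonal_orthogonal
  have hprojK : ∀ x ∈ K, (Kᗮ.orthogonalProjectionOnto x : E) = 0 := by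
    intro x hx
    have hx2 : x ∈ Kᗮᗮ := by rw [hKbot]; exact hx
    rw [Submodule.orthogonalProjectionOnto_apply_of_mem_orthogonal (K := Kᗮ) hx2]
    rfl
  have hrT : ∀ g : E, r (T g) = (Kᗮ.orthogonalProjectionOnto g : E) := by
    intro g
    have h : ∃ g' : E, T g = T g' := ⟨g, rfl⟩
    have hc : T g = T (pre (T g)) := by
      simp only [pre, dif_pos h]; exact h.choose_spec
    have hk' : pre (T g) - g ∈ K := by
      simp only [K, LinearMap.mem_ker, map_sub]
      rw [← hc, sub_self]
    have h0 := hprojK _ hk'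
    rw [map_sub, Submodule.coe_sub, sub_eq_zero] at h0
    exact h0
  have hTr : ∀ f ∈ Hplus, T (r f) = f := by
    intro f hf
    have h1 : pre f - r f ∈ K := by
      rw [← hKbot]
      exact Submodule.sub_starProjection_mem_orthogonal (K := Kᗮ) (pre f)
    have h2 : T (pre f) - T (r f) = 0 := by
      rw [← map_sub]; exact h1
    rw [sub_eq_zero] at h2
    rw [← h2, ← hpre f hf]
  have hradd : ∀ f ∈ Hplus, ∀ g ∈ Hplus, r (f + g) = r f + r g := by
    intro f hf g hg
    obtain ⟨a, ha⟩ := (hmem f).mp hf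
    obtain ⟨b, hb⟩ := (hmem g).mp hg
    have : f + g = T (a + b) := by rw [map_add, ha, hb]
    rw [this, hrT, ha, hb, hrT, hrT, map_add]
    rfl
  have hrsub : ∀ f ∈ Hplus, ∀ g ∈ Hplus, r (f - g) = r f - r g := by
    intro f hf g hg
    obtain ⟨a, ha⟩ := (hmem f).mp hf
    obtain ⟨b, hb⟩ := (hmem g).mp hg
    have : f - g = T (a - b) := by rw [map_sub, ha, hb]
    rw [this, hrT, ha, hb, hrT, hrT, map_sub]
    rfl
  have hrsmul : ∀ (c : ℝ), ∀ f ∈ Hplus, r (c • f) = c • r f := by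
    intro c f hf
    obtain ⟨a, ha⟩ := (hmem f).mp hf
    have : c • f = T (c • a) := by rw [map_smul, ha]
    rw [this, hrT, ha, hrT, map_smul]
    rfl
  have hsubmem : ∀ f ∈ Hplus, ∀ g ∈ Hplus, f - g ∈ Hplus := by
    intro f hf g hg
    obtain ⟨a, ha⟩ := (hmem f).mp hf
    obtain ⟨b, hb⟩ := (hmem g).mp hg
    exact (hmem _).mpr ⟨a - b, by rw [map_sub, ha, hb]⟩
  refine ⟨fun f g => ⟪r f, r g⟫, ?_, ?_, ?_, ?_, ?_, ?_, ?_, ?_, ?_⟩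
  · intro f _ g _; exact real_inner_comm _ _
  · intro f hf g hg h _
    dsimp only
    rw [hradd f hf g hg, inner_add_left]
  · intro c f hf g _
    dsimp only
    rw [hrsmul c f hf, real_inner_smul_left]
  · intro f _; exact real_inner_self_nonneg
  · intro f hf h
    dsimp only at h
    rw [inner_self_eq_zero] at h
    have h2 := hTr f hf
    rw [h, map_zero] at h2
    exact h2.symm
  · -- IsLeast
    intro f hf
    constructor
    · refine ⟨(r f).ofLp, ?_, ?_⟩
      · exact (hTr f hf).symm
      · dsimp only
        rw [real_inner_self_eq_norm_sq]
        exact PiLp.norm_sq_eq_of_L2 H (r f)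
    · rintro sv ⟨g, hg1, hg2⟩
      let g' : E := WithLp.toLp 2 g
      have hfg : f = T g' := hg1
      have h1 : r f = (Kᗮ.orthogonalProjectionOnto g' : E) := by rw [hfg, hrT]
      have h2 : ‖(Kᗮ.orthogonalProjectionOnto g' : E)‖ ≤ ‖g'‖ := by
        have := (Kᗮ.orthogonalProjectionOnto).le_opNorm g'
        have hop := Submodule.orthogonalProjectionOnto_norm_le (K := (Kᗮ : Submodule ℝ E))
        calc ‖(Kᗮ.orthogonalProjectionOnto g' : E)‖ = ‖Kᗮ.orthogonalProjectionOnto g'‖ := rfl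
          _ ≤ ‖(Kᗮ : Submodule ℝ E).orthogonalProjectionOnto‖ * ‖g'‖ := this
          _ ≤ 1 * ‖g'‖ := by
              apply mul_le_mul_of_nonneg_right hop (norm_nonneg _)
          _ = ‖g'‖ := one_mul _
      have h3 : ‖g'‖ ^ 2 = sv := by
        rw [hg2]; exact PiLp.norm_sq_eq_of_L2 H g'
      dsimp only
      rw [real_inner_self_eq_norm_sq, h1, ← h3]
      have := norm_nonneg ((Kᗮ.orthogonalProjectionOnto g' : E))
      nlinarith
  · -- completeness
    intro s hs hc
    have hdiff : ∀ m n, ⟪r (s m - s n), r (s m - s n)⟫ = ‖r (s m) - r (s n)‖ ^ 2 := by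
      intro m n
      rw [hrsub _ (hs m) _ (hs n), real_inner_self_eq_norm_sq]
    have hCauchy : CauchySeq (fun n => r (s n)) := by
      rw [Metric.cauchySeq_iff]
      intro ε hε
      obtain ⟨N, hN⟩ := hc (ε ^ 2) (by positivity)
      refine ⟨N, fun m hm n hn => ?_⟩
      have h1 := hN m hm n hn
      dsimp only at h1
      rw [hdiff m n] at h1
      rw [dist_eq_norm]
      nlinarith [norm_nonneg (r (s m) - r (s n))]
    obtain ⟨g, hg⟩ := cauchySeq_tendsto_of_complete hCauchy
    have hgmem : g ∈ Kᗮ := by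
      have : ∀ᶠ n in Filter.atTop, r (s n) ∈ (Kᗮ : Set E) :=
        Filter.Eventually.of_forall fun n => hrmem (s n)
      exact K.isClosed_orthogonal.mem_of_tendsto hg this
    refine ⟨T g, (hmem _).mpr ⟨g, rfl⟩, ?_⟩
    have hrTg : r (T g) = g := by
      rw [hrT g]
      exact (Submodule.starProjection_eq_self_iff (K := Kᗮ)).mpr hgmem
    have heq : ∀ n, ⟪r (s n - T g), r (s n - T g)⟫ = ‖r (s n) - g‖ ^ 2 := by
      intro n
      rw [hrsub _ (hs n) _ ((hmem _).mpr ⟨g, rfl⟩), hrTg, real_inner_self_eq_norm_sq]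
    dsimp only
    simp only [heq]
    have h0 : Filter.Tendsto (fun n => ‖r (s n) - g‖) Filter.atTop (nhds 0) :=
      tendsto_iff_norm_sub_tendsto_zero.mp hg
    have := h0.pow 2
    simpa using this
  · intro u
    refine (hmem _).mpr ⟨kvec u, ?_⟩
    funext v
    rw [hTeval]
    rw [PiLp.inner_apply]
    congr 1
    funext q
    simp only [kvec, WithLp.ofLp_toLp]
    rw [hrep, hk]
  · intro f hf u
    have hκ : (fun v => ∑ q, κ q v u) = T (kvec u) := by
      funext v
      rw [hTeval, PiLp.inner_apply]
      congr 1
      funext q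
      simp only [kvec, WithLp.ofLp_toLp]
      rw [hrep, hk]
    dsimp only
    rw [hκ, hrT]
    have h1 : kvec u - (Kᗮ.orthogonalProjectionOnto (kvec u) : E) ∈ K := by
      have := Submodule.sub_starProjection_mem_orthogonal (K := Kᗮ) (kvec u)
      rwa [hKbot] at this
    have h2 : ⟪r f, kvec u - (Kᗮ.orthogonalProjectionOnto (kvec u) : E)⟫ = 0 := by
      rw [real_inner_comm]
      exact (Submodule.mem_orthogonal K (r f)).mp (hrmem f) _ h1
    rw [inner_sub_right] at h2
    have h3 : ⟪r f, (Kᗮ.orthogonalProjectionOnto (kvec u) : E)⟫ = ⟪r f, kvec u⟫ := by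
      linarith
    rw [h3, ← hTeval, hTr f hf]
end

section
/- Let L be a positive integer, let U ⊆ ℝ^L be a set with nonempty interior, and let σ > 0. Suppose p : ℝ^L → ℝ is a polynomial function, n is a positive integer, u_1, …, u_n ∈ U, and α_1, …, α_n ∈ ℝ are such that Σ_{j=1}^n α_j exp(−‖x − u_j‖² / (2σ²)) = p(x) for every x ∈ U. Then p(x) = 0 for every x ∈ U; moreover, if the centers u_1, …, u_n are pairwise distinct, then α_j = 0 for every j. -/
open Real Filter Set
open scoped InnerProductSpace

/-- Evaluation of a multivariate polynomial along an affine line, as a one-variable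
polynomial. -/
private lemma eval_aeval_line {L : ℕ} (x v : Fin L → ℝ) (p : MvPolynomial (Fin L) ℝ) (t : ℝ) :
    Polynomial.eval t
      (MvPolynomial.aeval (fun i => Polynomial.C (x i) + Polynomial.C (v i) * Polynomial.X) p)
      = MvPolynomial.eval (fun i => x i + v i * t) p := by
  induction p using MvPolynomial.induction_on with
  | C a => simp
  | add p q hp hq => simp [hp, hq]
  | mul_X p i hp => simp [hp]

private lemma normsq_eq {L : ℕ} (y : EuclideanSpace ℝ (Fin L)) :
    ‖y‖ ^ 2 = ∑ i, (y i) ^ 2 := by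
  rw [EuclideanSpace.norm_eq, Real.sq_sqrt (by positivity)]
  simp [sq_abs]

private lemma analytic_gauss {L : ℕ} (σ : ℝ) (c : EuclideanSpace ℝ (Fin L)) :
    AnalyticOnNhd ℝ (fun x : EuclideanSpace ℝ (Fin L) =>
      Real.exp (-‖x - c‖ ^ 2 / (2 * σ ^ 2))) Set.univ := by
  have h1 : AnalyticOnNhd ℝ (fun x : EuclideanSpace ℝ (Fin L) =>
      (-∑ i, (x i - c i) ^ 2) * (2 * σ ^ 2)⁻¹) Set.univ := by
    intro x hx
    exact ((Finset.analyticAt_fun_sum _ (fun i _ =>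
      (((EuclideanSpace.proj i (𝕜 := ℝ)).analyticAt x).fun_sub analyticAt_const).fun_pow 2)).fun_neg).fun_mul
      analyticAt_const
  have h2 := h1.rexp
  have hfun : (fun x : EuclideanSpace ℝ (Fin L) => Real.exp (-‖x - c‖ ^ 2 / (2 * σ ^ 2)))
      = fun x => Real.exp ((-∑ i, (x i - c i) ^ 2) * (2 * σ ^ 2)⁻¹) := by
    funext x
    rw [normsq_eq (x - c), div_eq_mul_inv]
    simp [PiLp.sub_apply]
  rw [hfun]
  exact h2

private lemma analytic_poly {L : ℕ} (p : MvPolynomial (Fin L) ℝ) :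
    AnalyticOnNhd ℝ (fun x : EuclideanSpace ℝ (Fin L) =>
      MvPolynomial.eval (fun i => x i) p) Set.univ := by
  induction p using MvPolynomial.induction_on with
  | C a => simpa using (analyticOnNhd_const : AnalyticOnNhd ℝ (fun _ => a) _)
  | add p q hp hq => simp only [MvPolynomial.eval_add]; exact hp.add hq
  | mul_X p i hp =>
      simp only [MvPolynomial.eval_mul, MvPolynomial.eval_X]
      exact hp.mul (fun x _ => (EuclideanSpace.proj i (𝕜 := ℝ)).analyticAt x)

/-- The character `t ↦ exp (⟪t, u₀⟫ / σ²)` on the additive group `ℝ^L`, viewed as a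
monoid homomorphism from `Multiplicative (ℝ^L)` to `ℝ`. -/
private noncomputable def gaussChar {L : ℕ} (σ : ℝ) (u₀ : EuclideanSpace ℝ (Fin L)) :
    Multiplicative (EuclideanSpace ℝ (Fin L)) →* ℝ where
  toFun t := Real.exp (⟪Multiplicative.toAdd t, u₀⟫_ℝ / σ ^ 2)
  map_one' := by simp
  map_mul' a b := by
    simp [inner_add_left, add_div, Real.exp_add]

private lemma gaussChar_injective {L : ℕ} {σ : ℝ} (hσ : 0 < σ) :
    Function.Injective (gaussChar (L := L) σ) := by
  intro a b hab
  have h := congrArg (fun φ : Multiplicative (EuclideanSpace ℝ (Fin L)) →* ℝ =>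
    φ (Multiplicative.ofAdd (a - b))) hab
  simp only [gaussChar, MonoidHom.coe_mk, OneHom.coe_mk, toAdd_ofAdd] at h
  have h2 : ⟪a - b, a⟫_ℝ / σ ^ 2 = ⟪a - b, b⟫_ℝ / σ ^ 2 := Real.exp_injective h
  have hσ2 : (σ : ℝ) ^ 2 ≠ 0 := by positivity
  have h2' := congrArg (fun r : ℝ => r * σ ^ 2) h2
  rw [div_mul_cancel₀ _ hσ2, div_mul_cancel₀ _ hσ2] at h2'
  have h3 : ⟪a - b, a - b⟫_ℝ = 0 := by
    rw [inner_sub_right, h2', sub_self]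
  exact sub_eq_zero.mp (inner_self_eq_zero.mp h3)
  
/-- Minh's theorem (finite-linear-combination form): on a set `U ⊆ ℝ^L` with nonempty
interior, a finite linear combination of Gaussian bumps that coincides with a polynomial
on `U` must vanish on `U`; if moreover the centers are pairwise distinct, all
coefficients vanish. -/
theorem gaussian_combination_eq_polynomial_implies_zero
    (L : ℕ) (hL : 0 < L)
    (U : Set (EuclideanSpace ℝ (Fin L))) (hU : (interior U).Nonempty)
    (σ : ℝ) (hσ : 0 < σ)
    (p : MvPolynomial (Fin L) ℝ)
    (n : ℕ) (hn : 0 < n)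
    (u : Fin n → EuclideanSpace ℝ (Fin L)) (hu : ∀ j, u j ∈ U)
    (α : Fin n → ℝ)
    (h : ∀ x ∈ U,
      ∑ j, α j * Real.exp (-‖x - u j‖ ^ 2 / (2 * σ ^ 2)) =
        MvPolynomial.eval (fun i => x i) p) :
    (∀ x ∈ U, MvPolynomial.eval (fun i => x i) p = 0) ∧
    (Function.Injective u → ∀ j, α j = 0) := by
  classical
  set f : EuclideanSpace ℝ (Fin L) → ℝ :=
    fun x => ∑ j, α j * Real.exp (-‖x - u j‖ ^ 2 / (2 * σ ^ 2)) with hfdef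
  set g : EuclideanSpace ℝ (Fin L) → ℝ :=
    fun x => MvPolynomial.eval (fun i => x i) p with hgdef
  have hσ2 : (0 : ℝ) < 2 * σ ^ 2 := by positivity
  -- f and g are analytic on all of ℝ^L
  have hfa : AnalyticOnNhd ℝ f Set.univ := by
    intro x hx
    exact Finset.analyticAt_fun_sum _ fun j _ =>
      analyticAt_const.fun_mul (analytic_gauss σ (u j) x hx)
  have hga : AnalyticOnNhd ℝ g Set.univ := analytic_poly p
  -- identity theorem
  obtain ⟨z₀, hz₀⟩ := hU
  have hev : f =ᶠ[nhds z₀] g := by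
    filter_upwards [isOpen_interior.mem_nhds hz₀] with x hx
    exact h x (interior_subset hx)
  have heq : ∀ x, f x = g x := by
    intro x
    exact AnalyticOnNhd.eqOn_of_preconnected_of_eventuallyEq hfa hga
      (convex_univ (𝕜 := ℝ)).isPreconnected (Set.mem_univ z₀) hev (Set.mem_univ x)
  -- f tends to 0 along any line with nonzero direction
  set v : EuclideanSpace ℝ (Fin L) := EuclideanSpace.single ⟨0, hL⟩ (1 : ℝ) with hvdef
  have hvnorm : ‖v‖ = 1 := by simp [hvdef]
  have htend : ∀ x : EuclideanSpace ℝ (Fin L),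
      Tendsto (fun t : ℝ => f (x + t • v)) atTop (nhds 0) := by
    intro x
    have : (0 : ℝ) = ∑ j : Fin n, (0 : ℝ) := by simp
    rw [this]
    apply tendsto_finset_sum
    intro j _
    have hnorm : Tendsto (fun t : ℝ => ‖x + t • v - u j‖) atTop atTop := by
      apply tendsto_atTop_mono (f := fun t : ℝ => t - ‖u j - x‖)
      · intro t
        have h1 : x + t • v - u j = t • v - (u j - x) := by abel
        have h2 : ‖t • v‖ - ‖u j - x‖ ≤ ‖t • v - (u j - x)‖ := norm_sub_norm_le _ _
        have h3 : ‖t • v‖ = |t| := by rw [norm_smul, hvnorm]; simp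
        have h4 : t ≤ |t| := le_abs_self t
        rw [h1]
        linarith
      · exact tendsto_atTop_add_const_right _ _ tendsto_id
    have hsq : Tendsto (fun t : ℝ => ‖x + t • v - u j‖ ^ 2) atTop atTop := by
      exact (tendsto_pow_atTop (by norm_num : (2:ℕ) ≠ 0)).comp hnorm
    have hexp : Tendsto (fun t : ℝ => -‖x + t • v - u j‖ ^ 2 / (2 * σ ^ 2)) atTop atBot := by
      apply Tendsto.atBot_div_const hσ2
      exact tendsto_neg_atBot_iff.mpr hsq
    have := (Real.tendsto_exp_atBot.comp hexp).const_mul (α j)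
    simpa using this
  -- g vanishes everywhere
  have hg0 : ∀ x, g x = 0 := by
    intro x
    set q : Polynomial ℝ :=
      MvPolynomial.aeval (fun i => Polynomial.C (x i) + Polynomial.C (v i) * Polynomial.X) p
      with hqdef
    have hq : ∀ t : ℝ, q.eval t = g (x + t • v) := by
      intro t
      have hcoord : (fun i => (x + t • v) i) = fun i => x i + v i * t := by
        funext i
        simp only [PiLp.add_apply, PiLp.smul_apply, smul_eq_mul]
        ring
      rw [hgdef]
      simp only [hcoord]
      exact eval_aeval_line (fun i => x i) (fun i => v i) p t
    have hq0 : Tendsto (fun t : ℝ => q.eval t) atTop (nhds 0) := by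
      simp only [hq]
      simpa only [heq] using htend x
    have hdeg : q.degree ≤ 0 := by
      by_contra hd
      push_neg at hd
      have habs := Polynomial.abs_tendsto_atTop q hd
      exact not_tendsto_atTop_of_tendsto_nhds (hq0.abs) (by simpa using habs)
    have hqc : q = Polynomial.C (q.coeff 0) := Polynomial.eq_C_of_degree_le_zero hdeg
    have hc0 : q.coeff 0 = 0 := by
      have h1 : Tendsto (fun _ : ℝ => q.coeff 0) atTop (nhds (q.coeff 0)) := tendsto_const_nhds
      have h2 : (fun t : ℝ => q.eval t) = fun _ : ℝ => q.coeff 0 := by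
        funext t; conv_lhs => rw [hqc]
        simp
      rw [h2] at hq0
      exact tendsto_nhds_unique h1 hq0
    have := hq 0
    rw [hqc] at this
    simp only [Polynomial.eval_C, hc0] at this
    have hx0 : x + (0 : ℝ) • v = x := by simp
    rw [hx0] at this
    exact this.symm
  constructor
  · intro x _
    exact hg0 x
  · intro hinj j
    -- f vanishes everywhere
    have hf0 : ∀ x, f x = 0 := fun x => (heq x).trans (hg0 x)
    set β : Fin n → ℝ := fun j => α j * Real.exp (-‖u j‖ ^ 2 / (2 * σ ^ 2)) with hβdef
    have hsum : ∀ y : EuclideanSpace ℝ (Fin L),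
        ∑ j, β j * Real.exp (⟪y, u j⟫_ℝ / σ ^ 2) = 0 := by
      intro y
      have hterm : ∀ j, α j * Real.exp (-‖y - u j‖ ^ 2 / (2 * σ ^ 2))
          = Real.exp (-‖y‖ ^ 2 / (2 * σ ^ 2)) * (β j * Real.exp (⟪y, u j⟫_ℝ / σ ^ 2)) := by
        intro j
        rw [hβdef]
        simp only
        have hexp2 : -‖y - u j‖ ^ 2 / (2 * σ ^ 2)
            = -‖y‖ ^ 2 / (2 * σ ^ 2) + (-‖u j‖ ^ 2 / (2 * σ ^ 2) + ⟪y, u j⟫_ℝ / σ ^ 2) := by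
          rw [norm_sub_sq_real]
          have hσ' : σ ^ 2 ≠ 0 := by positivity
          field_simp
          ring
        rw [hexp2, Real.exp_add, Real.exp_add]
        ring
      have := hf0 y
      rw [hfdef] at this
      simp only at this
      rw [show (∑ j, α j * Real.exp (-‖y - u j‖ ^ 2 / (2 * σ ^ 2)))
          = Real.exp (-‖y‖ ^ 2 / (2 * σ ^ 2)) * ∑ j, β j * Real.exp (⟪y, u j⟫_ℝ / σ ^ 2) by
        rw [Finset.mul_sum]; exact Finset.sum_congr rfl fun j _ => hterm j] at this
      exact (mul_eq_zero.mp this).resolve_left (Real.exp_ne_zero _)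
    -- linear independence of characters
    have hLI : LinearIndependent ℝ
        (fun j : Fin n => ((gaussChar σ (u j) : Multiplicative (EuclideanSpace ℝ (Fin L)) →* ℝ) :
          Multiplicative (EuclideanSpace ℝ (Fin L)) → ℝ)) := by
      exact (linearIndependent_monoidHom (Multiplicative (EuclideanSpace ℝ (Fin L))) ℝ).comp
        (fun j => gaussChar σ (u j)) ((gaussChar_injective hσ).comp hinj)
    have hβ0 : ∀ j, β j = 0 := by
      apply Fintype.linearIndependent_iff.mp hLI β
      funext t
      have := hsum (Multiplicative.toAdd t)
      simpa [gaussChar, Finset.sum_apply] using this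
    have hβj := hβ0 j
    rw [hβdef] at hβj
    simp only at hβj
    exact (mul_eq_zero.mp hβj).resolve_right (Real.exp_ne_zero _)
end

section
/- Let H be a real Hilbert space, M ⊆ H a closed subspace, φ₀ ∈ H, and set V := M + φ₀ = { m + φ₀ : m ∈ M } (a closed affine set). Let k ∈ H and d ∈ ℝ, and assume P_M(k) ≠ 0, where P_M is the orthogonal projection onto M. Define Π_V := { f ∈ V : ⟨f, k⟩ = d }. Then Π_V is a nonempty closed convex subset of H, and for every f ∈ V the orthogonal projection of f onto Π_V is given by P_{Π_V}(f) = f + ((d − ⟨f, k⟩) / ‖P_M(k)‖²) · P_M(k). -/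
open scoped RealInnerProductSpace

/-- Proposition 1 (projection onto a hyperplane within a translated subspace):
for the affine set `V = M + φ₀` and the hyperplane `Π_V = {f ∈ V : ⟪f,k⟫ = d}` with
`P_M k ≠ 0`, `Π_V` is nonempty closed convex and for every `f ∈ V` the metric
projection of `f` onto `Π_V` is `f + ((d - ⟪f,k⟫)/‖P_M k‖²) • P_M k`. -/
theorem projection_onto_hyperplane_in_affine_set
    (H : Type*) [NormedAddCommGroup H] [InnerProductSpace ℝ H] [CompleteSpace H]
    (M : Submodule ℝ H) (hM : IsClosed (M : Set H)) [CompleteSpace M]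
    (φ₀ : H)
    (V : Set H) (hV : V = {f : H | ∃ m ∈ M, f = m + φ₀})
    (k : H) (d : ℝ)
    (hPk : (Submodule.orthogonalProjection M k : H) ≠ 0)
    (PiV : Set H) (hPiV : PiV = {f ∈ V | ⟪f, k⟫ = d}) :
    PiV.Nonempty ∧ IsClosed PiV ∧ Convex ℝ PiV ∧
    ∀ f ∈ V,
      (f + ((d - ⟪f, k⟫) / ‖(Submodule.orthogonalProjection M k : H)‖ ^ 2) •
          (Submodule.orthogonalProjection M k : H)) ∈ PiV ∧
      (∀ g ∈ PiV,
        ‖f - (f + ((d - ⟪f, k⟫) / ‖(Submodule.orthogonalProjection M k : H)‖ ^ 2) •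
            (Submodule.orthogonalProjection M k : H))‖ ≤ ‖f - g‖) ∧
      (∀ g ∈ PiV, (∀ h ∈ PiV, ‖f - g‖ ≤ ‖f - h‖) →
        g = f + ((d - ⟪f, k⟫) / ‖(Submodule.orthogonalProjection M k : H)‖ ^ 2) •
            (Submodule.orthogonalProjection M k : H)) := by
  set p : H := (Submodule.orthogonalProjection M k : H) with hp
  have hpM : p ∈ M := (Submodule.orthogonalProjection M k).2
  have hnp : ‖p‖ ^ 2 ≠ 0 := by
    have : ‖p‖ ≠ 0 := norm_ne_zero_iff.2 hPk
    positivity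
  have hkp : ∀ m ∈ M, ⟪m, k⟫ = ⟪m, p⟫ := by
    intro m hm
    have h1 : k - p ∈ Mᗮ := Submodule.sub_starProjection_mem_orthogonal (K := M) k
    have h2 : ⟪m, k - p⟫ = 0 := (Submodule.mem_orthogonal M _).1 h1 m hm
    rw [inner_sub_right] at h2
    linarith
  have hpk : ⟪p, k⟫ = ‖p‖ ^ 2 := by
    rw [hkp p hpM, real_inner_self_eq_norm_sq]
  -- the candidate projection
  set Pf : H → H := fun f => f + ((d - ⟪f, k⟫) / ‖p‖ ^ 2) • p with hPf
  have hmem : ∀ f ∈ V, Pf f ∈ PiV := by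
    intro f hf
    rw [hV] at hf
    obtain ⟨m, hm, rfl⟩ := hf
    rw [hPiV]
    constructor
    · rw [hV]
      exact ⟨m + ((d - ⟪m + φ₀, k⟫) / ‖p‖ ^ 2) • p,
        M.add_mem hm (M.smul_mem _ hpM), by simp [hPf]; abel⟩
    · simp only [hPf, inner_add_left, real_inner_smul_left, hpk]
      field_simp [norm_ne_zero_iff.2 hPk]
      ring
  -- difference of two elements of V lies in M
  have hdiff : ∀ f ∈ V, ∀ g ∈ V, f - g ∈ M := by
    intro f hf g hg
    rw [hV] at hf hg
    obtain ⟨m1, hm1, rfl⟩ := hf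
    obtain ⟨m2, hm2, rfl⟩ := hg
    have : m1 + φ₀ - (m2 + φ₀) = m1 - m2 := by abel
    rw [this]
    exact M.sub_mem hm1 hm2
  have hVmem : ∀ f ∈ V, Pf f ∈ V := by
    intro f hf
    have := hmem f hf
    rw [hPiV] at this
    exact this.1
  -- orthogonality and Pythagoras
  have hpyth : ∀ f ∈ V, ∀ g ∈ PiV, ‖f - g‖ ^ 2 = ‖f - Pf f‖ ^ 2 + ‖Pf f - g‖ ^ 2 := by
    intro f hf g hg
    have hgV : g ∈ V := by rw [hPiV] at hg; exact hg.1
    have hgk : ⟪g, k⟫ = d := by rw [hPiV] at hg; exact hg.2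
    have hPfk : ⟪Pf f, k⟫ = d := by
      have := hmem f hf; rw [hPiV] at this; exact this.2
    have hdM : Pf f - g ∈ M := hdiff _ (hVmem f hf) _ hgV
    have hdk : ⟪Pf f - g, k⟫ = 0 := by rw [inner_sub_left, hPfk, hgk]; ring
    have hdp : ⟪Pf f - g, p⟫ = 0 := by rw [← hkp _ hdM, hdk]
    have horth : ⟪f - Pf f, Pf f - g⟫ = 0 := by
      have h0 : f - Pf f = -(((d - ⟪f, k⟫) / ‖p‖ ^ 2) • p) := by
        simp only [hPf]; abel
      have hdp' : ⟪p, Pf f - g⟫ = 0 := by rw [real_inner_comm]; exact hdp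
      rw [h0, inner_neg_left, real_inner_smul_left, hdp', mul_zero, neg_zero]
    have : f - g = (f - Pf f) + (Pf f - g) := by abel
    rw [this, norm_add_sq_real, horth]
    ring
  refine ⟨?_, ?_, ?_, ?_⟩
  · -- nonempty
    have hφ : φ₀ ∈ V := by rw [hV]; exact ⟨0, M.zero_mem, by simp⟩
    exact ⟨Pf φ₀, hmem φ₀ hφ⟩
  · -- closed
    have hVc : IsClosed V := by
      rw [hV]
      have : {f : H | ∃ m ∈ M, f = m + φ₀} = (fun x => x + φ₀) '' (M : Set H) := by
        ext x
        constructor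
        · rintro ⟨m, hm, rfl⟩; exact ⟨m, hm, rfl⟩
        · rintro ⟨m, hm, rfl⟩; exact ⟨m, hm, rfl⟩
      rw [this]
      exact (Homeomorph.addRight φ₀).isClosedMap _ hM
    rw [hPiV]
    exact hVc.inter (isClosed_eq (continuous_id.inner continuous_const) continuous_const)
  · -- convex
    have hVconv : Convex ℝ V := by
      rw [hV]
      intro x hx y hy a b ha hb hab
      obtain ⟨m1, hm1, rfl⟩ := hx
      obtain ⟨m2, hm2, rfl⟩ := hy
      refine ⟨a • m1 + b • m2, M.add_mem (M.smul_mem _ hm1) (M.smul_mem _ hm2), ?_⟩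
      have : a • (m1 + φ₀) + b • (m2 + φ₀) = a • m1 + b • m2 + (a + b) • φ₀ := by
        simp only [smul_add, add_smul]; abel
      rw [this, hab, one_smul]
    rw [hPiV]
    intro x hx y hy a b ha hb hab
    refine ⟨hVconv hx.1 hy.1 ha hb hab, ?_⟩
    simp only [inner_add_left, real_inner_smul_left, hx.2, hy.2]
    linear_combination d * hab
  · intro f hf
    refine ⟨hmem f hf, ?_, ?_⟩
    · intro g hg
      have h := hpyth f hf g hg
      have : ‖f - Pf f‖ ^ 2 ≤ ‖f - g‖ ^ 2 := by nlinarith [sq_nonneg ‖Pf f - g‖]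
      nlinarith [this, norm_nonneg (f - Pf f), norm_nonneg (f - g)]
    · intro g hg hmin
      have h := hpyth f hf g hg
      have h2 := hmin _ (hmem f hf)
      have h3 : ‖Pf f - g‖ ^ 2 ≤ 0 := by nlinarith [norm_nonneg (f - g), norm_nonneg (f - Pf f)]
      have : Pf f - g = 0 := by
        have := sq_nonneg ‖Pf f - g‖
        have hn : ‖Pf f - g‖ = 0 := by nlinarith [norm_nonneg (Pf f - g)]
        exact norm_eq_zero.1 hn
      have : g = Pf f := by rwa [sub_eq_zero, eq_comm] at this
      exact this
end

section
/- Let L be a positive integer and let σ_1 > σ_2 > 0. Define, for σ > 0, the normalized Gaussian kernel κ_{G,σ}(x,y) := (√(2π) σ)^{−L} exp(−‖x − y‖² / (2σ²)) for x, y ∈ ℝ^L. Then the kernel κ := κ_{G,σ_2} − κ_{G,σ_1} is positive semidefinite on ℝ^L: for every positive integer n, every x_1, …, x_n ∈ ℝ^L, and every c_1, …, c_n ∈ ℝ, Σ_{i=1}^n Σ_{j=1}^n c_i c_j ( (√(2π) σ_2)^{−L} exp(−‖x_i − x_j‖² / (2σ_2²)) − (√(2π) σ_1)^{−L} exp(−‖x_i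 − x_j‖² / (2σ_1²)) ) ≥ 0. -/
open MeasureTheory Real Complex

local notation "⟪" x ", " y "⟫" => @inner ℝ _ _ x y

lemma aux_gauss_cos {L : ℕ} {b : ℝ} (hb : 0 < b) (u : EuclideanSpace ℝ (Fin L)) :
    ∫ v : EuclideanSpace ℝ (Fin L),
        Real.exp (-b * ‖v‖ ^ 2) * Real.cos ⟪u, v⟫ =
      (π / b) ^ ((L : ℝ) / 2) * Real.exp (-‖u‖ ^ 2 / (4 * b)) := by
  have hb' : 0 < (b : ℂ).re := by simpa using hb
  have hint := GaussianFourier.integrable_cexp_neg_mul_sq_norm_add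
    (V := EuclideanSpace ℝ (Fin L)) hb' Complex.I u
  have h := GaussianFourier.integral_cexp_neg_mul_sq_norm_add
    (V := EuclideanSpace ℝ (Fin L)) hb' Complex.I u
  have hre0 : ∫ v : EuclideanSpace ℝ (Fin L),
      (Complex.exp (-(b : ℂ) * (‖v‖ : ℂ) ^ 2 + Complex.I * (⟪u, v⟫ : ℝ))).re
      = (∫ v : EuclideanSpace ℝ (Fin L),
        Complex.exp (-(b : ℂ) * (‖v‖ : ℂ) ^ 2 + Complex.I * (⟪u, v⟫ : ℝ))).re := by
    simpa [RCLike.re_to_complex] using integral_re hint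
  have hre := hre0.trans (congrArg Complex.re h)
  have h1 : ∀ v : EuclideanSpace ℝ (Fin L),
      (Complex.exp (-(b : ℂ) * (‖v‖ : ℂ) ^ 2 + Complex.I * (⟪u, v⟫ : ℝ))).re
        = Real.exp (-b * ‖v‖ ^ 2) * Real.cos ⟪u, v⟫ := by
    intro v
    have harg : -(b : ℂ) * (‖v‖ : ℂ) ^ 2 + Complex.I * (⟪u, v⟫ : ℝ)
        = ((-b * ‖v‖ ^ 2 : ℝ) : ℂ) + ((⟪u, v⟫ : ℝ) : ℂ) * Complex.I := by
      push_cast; ring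
    rw [harg, Complex.exp_re]
    congr 1 <;> simp [← Complex.ofReal_pow]
  have hconst : ((π : ℂ) / b) ^ ((Module.finrank ℝ (EuclideanSpace ℝ (Fin L)) : ℂ) / 2) *
      Complex.exp (Complex.I ^ 2 * (‖u‖ : ℂ) ^ 2 / (4 * b))
      = (((π / b) ^ ((L : ℝ) / 2) * Real.exp (-‖u‖ ^ 2 / (4 * b)) : ℝ) : ℂ) := by
    have hπb : (0:ℝ) ≤ π / b := by positivity
    rw [Complex.I_sq,
      show ((Module.finrank ℝ (EuclideanSpace ℝ (Fin L)) : ℂ) / 2)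
        = (((L : ℝ) / 2 : ℝ) : ℂ) by simp,
      show ((π : ℂ) / b) = (((π / b : ℝ)) : ℂ) by push_cast; ring,
      ← Complex.ofReal_cpow hπb,
      show (-1 : ℂ) * (‖u‖ : ℂ) ^ 2 / (4 * b) = (((-‖u‖ ^ 2 / (4 * b) : ℝ)) : ℂ) by
        push_cast; ring,
      ← Complex.ofReal_exp, ← Complex.ofReal_mul]
  rw [hconst] at hre
  calc ∫ v : EuclideanSpace ℝ (Fin L), Real.exp (-b * ‖v‖ ^ 2) * Real.cos ⟪u, v⟫
      = ∫ v : EuclideanSpace ℝ (Fin L),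
        (Complex.exp (-(b : ℂ) * (‖v‖ : ℂ) ^ 2 + Complex.I * (⟪u, v⟫ : ℝ))).re :=
        integral_congr_ae (Filter.Eventually.of_forall fun v => (h1 v).symm)
    _ = _ := hre.trans (Complex.ofReal_re _)

lemma aux_integrable {L : ℕ} {b : ℝ} (hb : 0 < b) (u : EuclideanSpace ℝ (Fin L)) :
    Integrable (fun v : EuclideanSpace ℝ (Fin L) ↦
      Real.exp (-b * ‖v‖ ^ 2) * Real.cos ⟪u, v⟫) := by
  have hb' : 0 < (b : ℂ).re := by simpa using hb
  have h0 : Integrable (fun v : EuclideanSpace ℝ (Fin L) ↦ Real.exp (-b * ‖v‖ ^ 2)) := by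
    have h := (GaussianFourier.integrable_cexp_neg_mul_sq_norm_add
      (V := EuclideanSpace ℝ (Fin L)) hb' 0 0).re
    refine h.congr (Filter.Eventually.of_forall fun v => ?_)
    simp [Complex.exp_re, ← Complex.ofReal_pow]
  have hmeas : AEStronglyMeasurable
      (fun v : EuclideanSpace ℝ (Fin L) ↦ Real.cos ⟪u, v⟫) volume :=
    (Real.continuous_cos.comp (continuous_const.inner continuous_id)).aestronglyMeasurable
  have := h0.bdd_mul (c := 1) hmeas (Filter.Eventually.of_forall fun v => by
    simpa using Real.abs_cos_le_one (⟪u, v⟫ : ℝ))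
  simpa [mul_comm] using this

lemma aux_kernel_repr {L : ℕ} {σ : ℝ} (hσ : 0 < σ) (u : EuclideanSpace ℝ (Fin L)) :
    ((Real.sqrt (2 * π) * σ) ^ L)⁻¹ * Real.exp (-‖u‖ ^ 2 / (2 * σ ^ 2)) =
      (2 * π) ^ (-(L : ℝ)) * ∫ v : EuclideanSpace ℝ (Fin L),
        Real.exp (-(σ ^ 2 / 2) * ‖v‖ ^ 2) * Real.cos ⟪u, v⟫ := by
  rw [aux_gauss_cos (by positivity) u]
  have h4 : 4 * (σ ^ 2 / 2) = 2 * σ ^ 2 := by ring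
  rw [h4]
  rw [show π / (σ ^ 2 / 2) = 2 * π / σ ^ 2 by ring]
  have hσ2 : (0:ℝ) < σ ^ 2 := by positivity
  have h2π : (0:ℝ) < 2 * π := by positivity
  have hdiv : ((2 * π) / σ ^ 2) ^ ((L : ℝ) / 2)
      = (2 * π) ^ ((L : ℝ) / 2) / (σ ^ 2) ^ ((L : ℝ) / 2) :=
    Real.div_rpow h2π.le hσ2.le _
  have hσL : (σ ^ 2 : ℝ) ^ ((L : ℝ) / 2) = σ ^ L := by
    rw [← Real.rpow_natCast σ 2, ← Real.rpow_mul hσ.le,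
      show ((2:ℕ):ℝ) * ((L:ℝ)/2) = (L:ℝ) by push_cast; ring, Real.rpow_natCast]
  have hsqrt : (Real.sqrt (2 * π) * σ) ^ L = (2 * π) ^ ((L : ℝ) / 2) * σ ^ L := by
    rw [mul_pow, ← Real.rpow_natCast (Real.sqrt (2 * π)) L, Real.sqrt_eq_rpow,
      ← Real.rpow_mul h2π.le, show (1/2 : ℝ) * (L:ℝ) = (L:ℝ)/2 by ring]
  rw [hdiv, hσL, hsqrt, ← mul_assoc, Real.rpow_neg h2π.le, Real.rpow_natCast]
  congr 1
  have hsplit : ((2 * π) ^ L : ℝ) = (2 * π) ^ ((L:ℝ)/2) * (2 * π) ^ ((L:ℝ)/2) := by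
    rw [← Real.rpow_add h2π, show (L:ℝ)/2 + (L:ℝ)/2 = (L:ℝ) by ring, Real.rpow_natCast]
  rw [hsplit, mul_inv]
  have hp : (0:ℝ) < (2*π) ^ ((L:ℝ)/2) := Real.rpow_pos_of_pos h2π _
  have hs : (0:ℝ) < σ ^ L := by positivity
  field_simp

lemma aux_cos_sum_nonneg {n : ℕ} (c a : Fin n → ℝ) :
    0 ≤ ∑ i, ∑ j, c i * c j * Real.cos (a i - a j) := by
  have h : ∑ i, ∑ j, c i * c j * Real.cos (a i - a j)
      = (∑ i, c i * Real.cos (a i)) ^ 2 + (∑ i, c i * Real.sin (a i)) ^ 2 := by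
    rw [sq, sq, Finset.sum_mul_sum, Finset.sum_mul_sum, ← Finset.sum_add_distrib]
    refine Finset.sum_congr rfl fun i _ ↦ ?_
    rw [← Finset.sum_add_distrib]
    refine Finset.sum_congr rfl fun j _ ↦ ?_
    rw [Real.cos_sub]; ring
  rw [h]; positivity

/-- The difference of two normalized Gaussian kernels, the wider one minus the
narrower one (`σ₁ > σ₂ > 0`), is a positive semidefinite kernel on `ℝ^L`. -/
theorem gaussian_difference_positive_semidefinite
    (L : ℕ) (hL : 0 < L)
    (σ₁ σ₂ : ℝ) (h₂₁ : σ₂ < σ₁) (h₂ : 0 < σ₂)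
    (n : ℕ) (hn : 0 < n)
    (x : Fin n → EuclideanSpace ℝ (Fin L)) (c : Fin n → ℝ) :
    0 ≤ ∑ i, ∑ j, c i * c j *
      (((Real.sqrt (2 * Real.pi) * σ₂) ^ L)⁻¹ *
          Real.exp (-‖x i - x j‖ ^ 2 / (2 * σ₂ ^ 2)) -
        ((Real.sqrt (2 * Real.pi) * σ₁) ^ L)⁻¹ *
          Real.exp (-‖x i - x j‖ ^ 2 / (2 * σ₁ ^ 2))) := by
  have h₁ : 0 < σ₁ := h₂.trans h₂₁
  have h2π : (0:ℝ) < 2 * π := by positivity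
  set g : ℝ → Fin n → Fin n → EuclideanSpace ℝ (Fin L) → ℝ := fun σ i j v =>
    Real.exp (-(σ ^ 2 / 2) * ‖v‖ ^ 2) * Real.cos ⟪x i - x j, v⟫ with hg
  have hint : ∀ (σ : ℝ), 0 < σ → ∀ i j : Fin n, Integrable (g σ i j) :=
    fun σ hσ i j => aux_integrable (by positivity) _
  set h : Fin n → Fin n → EuclideanSpace ℝ (Fin L) → ℝ := fun i j v =>
    c i * c j * (g σ₂ i j v - g σ₁ i j v) with hh
  have hIJ : ∀ i j : Fin n, Integrable (h i j) :=
    fun i j => ((hint σ₂ h₂ i j).sub (hint σ₁ h₁ i j)).const_mul _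
  have hI : ∀ i : Fin n, Integrable (fun v => ∑ j, h i j v) :=
    fun i => integrable_finset_sum _ (fun j _ => hIJ i j)
  have e1 : ∫ v, ∑ i, ∑ j, h i j v = ∑ i, ∑ j, ∫ v, h i j v := by
    rw [integral_finset_sum _ (fun i _ => hI i)]
    exact Finset.sum_congr rfl fun i _ => integral_finset_sum _ (fun j _ => hIJ i j)
  have e2 : ∀ i j : Fin n, ∫ v, h i j v
      = c i * c j * ((∫ v, g σ₂ i j v) - ∫ v, g σ₁ i j v) := by
    intro i j
    simp only [hh]
    rw [integral_const_mul, integral_sub (hint σ₂ h₂ i j) (hint σ₁ h₁ i j)]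
  have hrepr2 : ∀ i j : Fin n,
      (((Real.sqrt (2 * Real.pi) * σ₂) ^ L)⁻¹ *
          Real.exp (-‖x i - x j‖ ^ 2 / (2 * σ₂ ^ 2)) -
        ((Real.sqrt (2 * Real.pi) * σ₁) ^ L)⁻¹ *
          Real.exp (-‖x i - x j‖ ^ 2 / (2 * σ₁ ^ 2)))
      = (2 * π) ^ (-(L:ℝ)) * ((∫ v, g σ₂ i j v) - ∫ v, g σ₁ i j v) := by
    intro i j
    simp only [hg]
    rw [aux_kernel_repr h₂ (x i - x j), aux_kernel_repr h₁ (x i - x j), mul_sub]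
  have hsum : ∑ i, ∑ j, c i * c j *
      (((Real.sqrt (2 * Real.pi) * σ₂) ^ L)⁻¹ *
          Real.exp (-‖x i - x j‖ ^ 2 / (2 * σ₂ ^ 2)) -
        ((Real.sqrt (2 * Real.pi) * σ₁) ^ L)⁻¹ *
          Real.exp (-‖x i - x j‖ ^ 2 / (2 * σ₁ ^ 2)))
      = (2 * π) ^ (-(L:ℝ)) * ∫ v, ∑ i, ∑ j, h i j v := by
    rw [e1, Finset.mul_sum]
    refine Finset.sum_congr rfl fun i _ => ?_
    rw [Finset.mul_sum]
    refine Finset.sum_congr rfl fun j _ => ?_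
    rw [hrepr2 i j, e2 i j]
    ring
  rw [hsum]
  refine mul_nonneg (Real.rpow_nonneg h2π.le _) (integral_nonneg fun v => ?_)
  have hF : 0 ≤ Real.exp (-(σ₂ ^ 2 / 2) * ‖v‖ ^ 2) - Real.exp (-(σ₁ ^ 2 / 2) * ‖v‖ ^ 2) := by
    rw [sub_nonneg]
    apply Real.exp_le_exp.2
    have hmul : σ₂ ^ 2 * ‖v‖ ^ 2 ≤ σ₁ ^ 2 * ‖v‖ ^ 2 :=
      mul_le_mul_of_nonneg_right (by nlinarith) (sq_nonneg _)
    nlinarith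
  have hkey : ∑ i, ∑ j, h i j v
      = (Real.exp (-(σ₂ ^ 2 / 2) * ‖v‖ ^ 2) - Real.exp (-(σ₁ ^ 2 / 2) * ‖v‖ ^ 2)) *
        ∑ i, ∑ j, c i * c j * Real.cos (⟪x i, v⟫ - ⟪x j, v⟫) := by
    rw [Finset.mul_sum]
    refine Finset.sum_congr rfl fun i _ => ?_
    rw [Finset.mul_sum]
    refine Finset.sum_congr rfl fun j _ => ?_
    simp only [hh, hg, inner_sub_left]
    ring
  rw [hkey]
  exact mul_nonneg hF (aux_cos_sum_nonneg c (fun i => ⟪x i, v⟫))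
end

section
/- Let U be a nonempty set and let H be a subspace of the real vector space of functions U → ℝ (with pointwise operations), equipped with an inner product ⟨·,·⟩_H making it a real Hilbert space, with reproducing kernel κ : U × U → ℝ (i.e., for every u ∈ U, κ(·,u) ∈ H and ⟨f, κ(·,u)⟩_H = f(u) for all f ∈ H). Given samples (u_j, d_j) ∈ U × ℝ, j = 1, …, r, and η > 0, define the regularized risk R(f) := (1/r) Σ_{j=1}^r (f(u_j) − d_j)² + η ‖f‖²_H for f ∈ H, and let K ∈ ℝ^{r×r} have entries K_{ij} = κ(u_i, u_j). Then the matrix K + η r I is invertible, and setting α := (K + η r I)^{−1} (d_1, …, d_r)ᵀ, the function f* := Σ_{j=1}^r α_j κ(·,u_j) is the unique minimizer of R over H: R(f*) < R(f) for every f ∈ H with f ≠ f*. -/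
open scoped RealInnerProductSpace

/-- Kernel ridge regression in a RKHS: the matrix `K + η r I` is invertible, and the
function `f* = ∑ j, α j • κ(·, u j)` with `α = (K + η r I)⁻¹ d` is the unique minimizer
of the regularized empirical risk `R(f) = (1/r) ∑ j (f(u j) - d j)² + η ‖f‖²`. -/
theorem kernel_ridge_regression
    (U : Type*) [Nonempty U]
    (H : Type*) [NormedAddCommGroup H] [InnerProductSpace ℝ H] [CompleteSpace H]
    (J : H →ₗ[ℝ] (U → ℝ)) (hJ : Function.Injective J)
    (κ : U → U → ℝ) (k : U → H)
    (hk : ∀ u : U, J (k u) = fun v => κ v u)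
    (hrep : ∀ (f : H) (u : U), ⟪f, k u⟫ = J f u)
    (r : ℕ) (hr : 0 < r) (u : Fin r → U) (d : Fin r → ℝ)
    (η : ℝ) (hη : 0 < η)
    (R : H → ℝ)
    (hR : R = fun f => (1 / (r : ℝ)) * ∑ j, (J f (u j) - d j) ^ 2 + η * ‖f‖ ^ 2)
    (K : Matrix (Fin r) (Fin r) ℝ) (hK : K = fun i j => κ (u i) (u j)) :
    IsUnit (K + (η * (r : ℝ)) • (1 : Matrix (Fin r) (Fin r) ℝ)) ∧
    ∀ α : Fin r → ℝ, α = (K + (η * (r : ℝ)) • (1 : Matrix (Fin r) (Fin r) ℝ))⁻¹.mulVec d →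
      ∀ f : H, f ≠ ∑ j, α j • k (u j) → R (∑ j, α j • k (u j)) < R f := by
  have hrpos : (0:ℝ) < r := by exact_mod_cast hr
  have hκ : ∀ i j : Fin r, κ (u i) (u j) = ⟪k (u j), k (u i)⟫ := by
    intro i j
    rw [hrep, hk]
  set M : Matrix (Fin r) (Fin r) ℝ := K + (η * (r:ℝ)) • 1 with hM
  -- Gram identity
  have hgram : ∀ x : Fin r → ℝ,
      dotProduct x (K.mulVec x) = ⟪∑ j, x j • k (u j), ∑ j, x j • k (u j)⟫ := by
    intro x
    rw [sum_inner]
    simp only [dotProduct, Matrix.mulVec, hK]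
    refine Finset.sum_congr rfl fun i _ => ?_
    rw [real_inner_smul_left, inner_sum]
    simp only [real_inner_smul_right, dotProduct]
    rw [Finset.mul_sum, Finset.mul_sum]
    refine Finset.sum_congr rfl fun j _ => ?_
    rw [hκ i j, real_inner_comm (k (u j))]
    ring
  have hKsymm : ∀ i j, K i j = K j i := by
    intro i j
    rw [hK]
    simp only
    rw [hκ, hκ, real_inner_comm]
  have hMsymm : M.IsHermitian := by
    ext i j
    simp only [hM, Matrix.conjTranspose_apply, Matrix.add_apply, Matrix.smul_apply,
      Matrix.one_apply, star_trivial]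
    rw [hKsymm j i]
    by_cases h : i = j <;> simp [h, eq_comm]
  have hMpd : M.PosDef := by
    refine Matrix.PosDef.of_dotProduct_mulVec_pos hMsymm fun x hx => ?_
    have hxx : 0 < dotProduct x x := by
      rcases Function.ne_iff.mp hx with ⟨i, hi⟩
      have h1 : ∀ j ∈ Finset.univ, (0:ℝ) ≤ x j * x j := fun j _ => mul_self_nonneg _
      exact Finset.sum_pos' h1 ⟨i, Finset.mem_univ i, mul_self_pos.mpr hi⟩
    have : dotProduct x (M.mulVec x) =
        ⟪∑ j, x j • k (u j), ∑ j, x j • k (u j)⟫ + (η * r) * (dotProduct x x) := by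
      rw [hM, Matrix.add_mulVec, dotProduct_add, hgram,
        Matrix.smul_mulVec, Matrix.one_mulVec, dotProduct_smul, smul_eq_mul]
    simp only [star_trivial, this]
    have h1 : (0:ℝ) ≤ ⟪∑ j, x j • k (u j), ∑ j, x j • k (u j)⟫ := real_inner_self_nonneg
    have h2 : 0 < η * (r:ℝ) * dotProduct x x := by positivity
    linarith
  have hMunit : IsUnit M := hMpd.isUnit
  refine ⟨hMunit, ?_⟩
  intro α hα f hf
  set f₀ : H := ∑ j, α j • k (u j) with hf0
  have hg : f - f₀ ≠ 0 := sub_ne_zero.mpr hf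
  set g : H := f - f₀ with hgdef
  have hfg : f = f₀ + g := by rw [hgdef]; abel
  -- M α = d
  have hMinv : M * M⁻¹ = 1 :=
    Matrix.mul_nonsing_inv M ((Matrix.isUnit_iff_isUnit_det M).mp hMunit)
  have hMα : M.mulVec α = d := by
    rw [hα, Matrix.mulVec_mulVec, hMinv, Matrix.one_mulVec]
  -- J f₀ at sample points
  have hJf0 : ∀ i, J f₀ (u i) = K.mulVec α i := by
    intro i
    rw [← hrep, hf0, sum_inner]
    simp only [real_inner_smul_left, Matrix.mulVec, dotProduct, hK]
    refine Finset.sum_congr rfl fun j _ => ?_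
    rw [hκ i j]
    ring
  -- normal equations
  have hnormal : (∑ j, (J f₀ (u j) - d j) • k (u j)) + (η * (r:ℝ)) • f₀ = 0 := by
    rw [hf0, Finset.smul_sum, ← Finset.sum_add_distrib]
    refine Finset.sum_eq_zero fun j _ => ?_
    rw [smul_smul, ← add_smul]
    convert zero_smul ℝ (k (u j)) using 2
    have h2 := congrFun hMα j
    rw [hM] at h2
    simp only [Matrix.add_mulVec, Matrix.smul_mulVec, Matrix.one_mulVec,
      Pi.add_apply, Pi.smul_apply, smul_eq_mul] at h2
    rw [hJf0 j]
    linarith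
  have horth : (∑ j, (J f₀ (u j) - d j) * J g (u j)) + (η * (r:ℝ)) * ⟪f₀, g⟫ = 0 := by
    have h3 : ⟪(∑ j, (J f₀ (u j) - d j) • k (u j)) + (η * (r:ℝ)) • f₀, g⟫ = 0 := by
      rw [hnormal, inner_zero_left]
    rw [inner_add_left, sum_inner, real_inner_smul_left] at h3
    simp only [real_inner_smul_left] at h3
    rw [← h3]
    congr 1
    refine Finset.sum_congr rfl fun j _ => ?_
    rw [real_inner_comm, hrep]
  -- expansion of risk
  set A : ℝ := ∑ j, (J f₀ (u j) - d j) ^ 2 with hA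
  set B : ℝ := ∑ j, (J f₀ (u j) - d j) * J g (u j) with hB
  set C : ℝ := ∑ j, (J g (u j)) ^ 2 with hC
  have hsum : ∑ j, (J f₀ (u j) + J g (u j) - d j) ^ 2 = A + 2 * B + C := by
    rw [hA, hB, hC, Finset.mul_sum, ← Finset.sum_add_distrib, ← Finset.sum_add_distrib]
    exact Finset.sum_congr rfl fun j _ => by ring
  have hRf : R f = (1 / (r:ℝ)) * (A + 2 * B + C)
      + η * (‖f₀‖ ^ 2 + 2 * ⟪f₀, g⟫ + ‖g‖ ^ 2) := by
    rw [hR]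
    simp only
    rw [hfg, norm_add_sq_real, ← hsum]
    congr 1
    refine congrArg _ (Finset.sum_congr rfl fun j _ => ?_)
    rw [map_add]
    rfl
  have hRf0 : R f₀ = (1 / (r:ℝ)) * A + η * ‖f₀‖ ^ 2 := by rw [hR]
  have hdiff : R f - R f₀ = (1 / (r:ℝ)) * C + η * ‖g‖ ^ 2
      + (2 / (r:ℝ)) * (B + (η * (r:ℝ)) * ⟪f₀, g⟫) := by
    rw [hRf, hRf0]
    field_simp
    ring
  have hdiff2 : R f - R f₀ = (1 / (r:ℝ)) * C + η * ‖g‖ ^ 2 := by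
    rw [hdiff, horth]
    ring
  have hCn : 0 ≤ C := Finset.sum_nonneg fun j _ => sq_nonneg _
  have hgn : 0 < ‖g‖ ^ 2 := by
    have := norm_pos_iff.mpr hg
    positivity
  have h4 : 0 ≤ (1 / (r:ℝ)) * C := by positivity
  nlinarith
end
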